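/- Let F be the formal power series over ℚ whose coefficient of q^n is (n+1)·σ₁(n+1), i.e., F = Σ_{k≥1} k·σ₁(k)·q^{k−1}. Then for every natural number g ≥ 1, the Bryan–Leung count N_{g,4} := g · (coefficient of q^4 in F^{g−1}) satisfies N_{g,4} = 6g(g−1)(9g³ − 45g² + 94g − 75). -/

import Mathlib

/-- The Bryan–Leung power series `F = Σ_{k≥1} k·σ₁(k)·q^{k−1}` over `ℚ`,
whose coefficient of `q^n` is `(n+1)·σ₁(n+1)`. -/
noncomputable def FBL : PowerSeries ℚ :=
  PowerSeries.mk fun n => (((n + 1) * ArithmeticFunction.sigma 1 (n + 1) : ℕ) : ℚ)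

lemma FBL0 : (PowerSeries.coeff (R := ℚ) 0) FBL = 1 := by
  have : ArithmeticFunction.sigma 1 1 = 1 := by decide
  simp [FBL, this]

lemma FBL1 : (PowerSeries.coeff (R := ℚ) 1) FBL = 6 := by
  have : ArithmeticFunction.sigma 1 2 = 3 := by decide
  simp [FBL, this]; norm_num

lemma FBL2 : (PowerSeries.coeff (R := ℚ) 2) FBL = 12 := by
  have : ArithmeticFunction.sigma 1 3 = 4 := by decide
  simp [FBL, this]
  norm_num

lemma FBL3 : (PowerSeries.coeff (R := ℚ) 3) FBL = 28 := by
  have : ArithmeticFunction.sigma 1 4 = 7 := by decide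
  simp [FBL, this]
  norm_num

lemma FBL4 : (PowerSeries.coeff (R := ℚ) 4) FBL = 30 := by
  have : ArithmeticFunction.sigma 1 5 = 6 := by decide
  simp [FBL, this]
  norm_num

lemma coeffs_pow (m : ℕ) :
    (PowerSeries.coeff (R := ℚ) 0) (FBL ^ m) = 1 ∧
    (PowerSeries.coeff (R := ℚ) 1) (FBL ^ m) = 6 * m ∧
    (PowerSeries.coeff (R := ℚ) 2) (FBL ^ m) = 12 * m + 18 * m * (m - 1) ∧
    (PowerSeries.coeff (R := ℚ) 3) (FBL ^ m)
      = 28 * m + 72 * m * (m - 1) + 36 * m * (m - 1) * (m - 2) ∧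
    (PowerSeries.coeff (R := ℚ) 4) (FBL ^ m)
      = 30 * m + 240 * m * (m - 1) + 216 * m * (m - 1) * (m - 2)
        + 54 * m * (m - 1) * (m - 2) * (m - 3) := by
  induction m with
  | zero => simp
  | succ n ih =>
    obtain ⟨h0, h1, h2, h3, h4⟩ := ih
    rw [pow_succ]
    refine ⟨?_, ?_, ?_, ?_, ?_⟩ <;>
      rw [PowerSeries.coeff_mul, Finset.Nat.sum_antidiagonal_eq_sum_range_succ_mk] <;>
      simp [Finset.sum_range_succ, h0, h1, h2, h3, h4,
        FBL0, FBL1, FBL2, FBL3, FBL4] <;>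
      push_cast <;> ring

/-- The Bryan–Leung count `N_{g,4} := g · (coefficient of q^4 in F^{g−1})`
is given by the node polynomial of Table (5.1). -/
theorem N_g_4 (g : ℕ) (hg : 1 ≤ g) :
    (g : ℚ) * (PowerSeries.coeff (R := ℚ) 4) (FBL ^ (g - 1)) =
      6 * (g : ℚ) * ((g : ℚ) - 1) * (9 * (g : ℚ) ^ 3 - 45 * (g : ℚ) ^ 2 + 94 * (g : ℚ) - 75) := by
  obtain ⟨m, rfl⟩ : ∃ m, g = m + 1 := ⟨g - 1, (Nat.succ_pred_eq_of_pos hg).symm⟩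
  rw [Nat.add_sub_cancel, (coeffs_pow m).2.2.2.2]
  push_cast
  ring
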